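/- Let ξ be a real number with |ξ| ≥ 2. Then the set of real ξ₁ satisfying 8/(9ξ²) ≤ ξ₁(ξ - ξ₁) ≤ 8/(3ξ²) has Lebesgue measure at most C·|ξ|^{-2} for some absolute constant C. -/

import Mathlib

theorem xi1_measure_bound :
    ∃ C > 0, ∀ ξ : ℝ, 2 ≤ |ξ| →
      MeasureTheory.volume
          {ξ₁ : ℝ | 8 / (9 * ξ ^ 2) ≤ ξ₁ * (ξ - ξ₁) ∧ ξ₁ * (ξ - ξ₁) ≤ 8 / (3 * ξ ^ 2)} ≤
        ENNReal.ofReal (C / ξ ^ 2) := by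
  refine ⟨4, by norm_num, fun ξ hξ => ?_⟩
  have hξ2 : (4:ℝ) ≤ ξ ^ 2 := by nlinarith [sq_abs ξ, abs_nonneg ξ]
  have hξ0 : (0:ℝ) < ξ ^ 2 := by linarith
  set a : ℝ := 8 / (9 * ξ ^ 2) with ha
  set b : ℝ := 8 / (3 * ξ ^ 2) with hb
  have hab : b - a = 16 / (9 * ξ ^ 2) := by
    rw [ha, hb]; field_simp; ring
  have hb_pos : (1:ℝ)/3 ≤ ξ ^ 2 / 4 - b := by
    rw [hb]
    have h1 : 8 / (3 * ξ ^ 2) ≤ (2:ℝ)/3 := by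
      rw [div_le_div_iff₀ (by positivity) (by norm_num)]; nlinarith
    linarith
  set r₁ : ℝ := Real.sqrt (ξ ^ 2 / 4 - b) with hr₁def
  set r₂ : ℝ := Real.sqrt (ξ ^ 2 / 4 - a) with hr₂def
  have hr₁nn : 0 ≤ r₁ := Real.sqrt_nonneg _
  have hr₁sq : r₁ ^ 2 = ξ ^ 2 / 4 - b := Real.sq_sqrt (by linarith)
  have hr₁lb : (4:ℝ)/9 ≤ r₁ := by nlinarith
  have hd : (0:ℝ) < 2 / ξ ^ 2 := by positivity
  have hr₂le : r₂ ≤ r₁ + 2 / ξ ^ 2 := by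
    rw [hr₂def, show r₁ + 2 / ξ ^ 2 = Real.sqrt ((r₁ + 2 / ξ ^ 2) ^ 2) from
      (Real.sqrt_sq (by positivity)).symm]
    apply Real.sqrt_le_sqrt
    have key : b - a ≤ 2 * r₁ * (2 / ξ ^ 2) := by
      rw [hab]
      rw [div_le_iff₀ (by positivity)]
      have : 2 * r₁ * (2 / ξ ^ 2) * (9 * ξ ^ 2) = 36 * r₁ := by
        rw [show 2 * r₁ * (2 / ξ ^ 2) * (9 * ξ ^ 2) = 36 * r₁ * (ξ ^ 2 / ξ ^ 2) by ring, div_self hξ0.ne', mul_one]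
      rw [this]; linarith
    nlinarith [sq_nonneg (2 / ξ ^ 2)]
  -- subset of two intervals
  have hsub : {ξ₁ : ℝ | a ≤ ξ₁ * (ξ - ξ₁) ∧ ξ₁ * (ξ - ξ₁) ≤ b} ⊆
      Set.Icc (ξ/2 - r₂) (ξ/2 - r₁) ∪ Set.Icc (ξ/2 + r₁) (ξ/2 + r₂) := by
    intro x hx
    obtain ⟨h1, h2⟩ := hx
    have hy : x * (ξ - x) = ξ ^ 2 / 4 - (x - ξ/2) ^ 2 := by ring
    have hylb : ξ ^ 2 / 4 - b ≤ (x - ξ/2) ^ 2 := by rw [hy] at h2; linarith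
    have hyub : (x - ξ/2) ^ 2 ≤ ξ ^ 2 / 4 - a := by rw [hy] at h1; linarith
    have habs1 : r₁ ≤ |x - ξ/2| := by
      rw [← Real.sqrt_sq_eq_abs]; exact Real.sqrt_le_sqrt hylb
    have habs2 : |x - ξ/2| ≤ r₂ := by
      rw [← Real.sqrt_sq_eq_abs]; exact Real.sqrt_le_sqrt hyub
    rcases le_or_gt 0 (x - ξ/2) with h | h
    · right
      rw [abs_of_nonneg h] at habs1 habs2
      constructor <;> linarith
    · left
      rw [abs_of_neg h] at habs1 habs2
      constructor <;> linarith
  calc MeasureTheory.volume {ξ₁ : ℝ | a ≤ ξ₁ * (ξ - ξ₁) ∧ ξ₁ * (ξ - ξ₁) ≤ b}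
      ≤ MeasureTheory.volume (Set.Icc (ξ/2 - r₂) (ξ/2 - r₁) ∪ Set.Icc (ξ/2 + r₁) (ξ/2 + r₂)) :=
        MeasureTheory.measure_mono hsub
    _ ≤ MeasureTheory.volume (Set.Icc (ξ/2 - r₂) (ξ/2 - r₁)) +
        MeasureTheory.volume (Set.Icc (ξ/2 + r₁) (ξ/2 + r₂)) := MeasureTheory.measure_union_le _ _
    _ = ENNReal.ofReal ((ξ/2 - r₁) - (ξ/2 - r₂)) + ENNReal.ofReal ((ξ/2 + r₂) - (ξ/2 + r₁)) := by
        rw [Real.volume_Icc, Real.volume_Icc]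
    _ = ENNReal.ofReal (r₂ - r₁) + ENNReal.ofReal (r₂ - r₁) := by ring_nf
    _ ≤ ENNReal.ofReal (2 / ξ ^ 2) + ENNReal.ofReal (2 / ξ ^ 2) := by
        gcongr <;> linarith
    _ = ENNReal.ofReal (4 / ξ ^ 2) := by
        rw [← ENNReal.ofReal_add (le_of_lt hd) (le_of_lt hd)]
        congr 1; field_simp; ring
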